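/- For any complex number z, the maximum of |z₁|² + |2·z·z₁ + z₂|² over all complex z₁, z₂ with |z₁|² + |z₂|² = 1 equals (|z| + √(1 + |z|²))². -/

import Mathlib

set_option maxHeartbeats 1000000


theorem stmt_1 (z : ℂ) :
    IsGreatest {x : ℝ | ∃ z₁ z₂ : ℂ, ‖z₁‖ ^ 2 + ‖z₂‖ ^ 2 = 1 ∧
      x = ‖z₁‖ ^ 2 + ‖2 * z * z₁ + z₂‖ ^ 2}
      ((‖z‖ + Real.sqrt (1 + ‖z‖ ^ 2)) ^ 2) := by
  have hr : 0 ≤ ‖z‖ := norm_nonneg z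
  set r := ‖z‖ with hr_def
  set M := Real.sqrt (1 + r ^ 2) with hM_def
  have hM2 : M ^ 2 = 1 + r ^ 2 := Real.sq_sqrt (by positivity)
  have hM0 : 0 < M := Real.sqrt_pos.mpr (by positivity)
  have hrM : r < M := by nlinarith
  constructor
  · -- membership
    by_cases hz : z = 0
    · refine ⟨1, 0, by simp, ?_⟩
      simp [hz, hr_def, hM_def]
    · have hr0 : 0 < r := by
        simpa [hr_def] using norm_pos_iff.mpr hz
      set a := Real.sqrt ((r + M) / (2 * M)) with ha_def
      set b := Real.sqrt ((M - r) / (2 * M)) with hb_def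
      have ha0 : 0 ≤ a := Real.sqrt_nonneg _
      have hb0 : 0 ≤ b := Real.sqrt_nonneg _
      have ha2 : a ^ 2 = (r + M) / (2 * M) := Real.sq_sqrt (by positivity)
      have hb2 : b ^ 2 = (M - r) / (2 * M) := by
        apply Real.sq_sqrt
        have : 0 ≤ M - r := by linarith
        positivity
      have hab : a * b = 1 / (2 * M) := by
        rw [ha_def, hb_def, ← Real.sqrt_mul (by positivity)]
        have h1 : (r + M) / (2 * M) * ((M - r) / (2 * M)) = (1 / (2 * M)) ^ 2 := by
          field_simp
          nlinarith [hM2]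
        rw [h1, Real.sqrt_sq (by positivity)]
      refine ⟨(a : ℂ), ((b / r : ℝ) : ℂ) * z, ?_, ?_⟩
      · have h1 : ‖(a : ℂ)‖ = a := by
          rw [Complex.norm_real, Real.norm_eq_abs, abs_of_nonneg ha0]
        have h2 : ‖((b / r : ℝ) : ℂ) * z‖ = b := by
          rw [norm_mul, Complex.norm_real, Real.norm_eq_abs]
          rw [abs_of_nonneg (by positivity), ← hr_def]
          field_simp
        rw [h1, h2, ha2, hb2]
        field_simp
        ring
      · have h1 : ‖(a : ℂ)‖ = a := by
          rw [Complex.norm_real, Real.norm_eq_abs, abs_of_nonneg ha0]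
        have h3 : 2 * z * (a : ℂ) + ((b / r : ℝ) : ℂ) * z = ((2 * a + b / r : ℝ) : ℂ) * z := by
          push_cast
          ring
        have h4 : ‖2 * z * (a : ℂ) + ((b / r : ℝ) : ℂ) * z‖ = 2 * a * r + b := by
          rw [h3, norm_mul, Complex.norm_real, Real.norm_eq_abs, abs_of_nonneg (by positivity), ← hr_def]
          field_simp
        rw [h1, h4]
        have expand : a ^ 2 + (2 * a * r + b) ^ 2
            = (1 + 4 * r ^ 2) * a ^ 2 + 4 * r * (a * b) + b ^ 2 := by ring
        rw [expand, ha2, hb2, hab]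
        field_simp
        nlinarith [hM2]
  · -- upper bound
    rintro x ⟨z₁, z₂, hcon, rfl⟩
    set a := ‖z₁‖ with ha_def
    set b := ‖z₂‖ with hb_def
    set c := ‖2 * z * z₁ + z₂‖ with hc_def
    clear_value a b c
    have ha0 : 0 ≤ a := by rw [ha_def]; exact norm_nonneg z₁
    have hb0 : 0 ≤ b := by rw [hb_def]; exact norm_nonneg z₂
    have hc0 : 0 ≤ c := by rw [hc_def]; exact norm_nonneg _
    have habs : c ≤ 2 * r * a + b := by
      rw [hc_def, ha_def, hb_def]
      calc ‖2 * z * z₁ + z₂‖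
          ≤ ‖2 * z * z₁‖ + ‖z₂‖ := norm_add_le _ _
        _ = 2 * r * ‖z₁‖ + ‖z₂‖ := by
            rw [norm_mul, norm_mul]
            simp [Complex.norm_two, hr_def]
    have hc2 : c ^ 2 ≤ (2 * r * a + b) ^ 2 := by
      exact pow_le_pow_left₀ hc0 habs 2
    have hsq : (a ^ 2 + b ^ 2) ^ 2 = 1 := by rw [hcon]; ring
    have ht2 : (r * (a ^ 2 - b ^ 2) + 2 * a * b) ^ 2 ≤ M ^ 2 := by
      nlinarith [sq_nonneg ((a ^ 2 - b ^ 2) - r * (2 * a * b)), hM2, hsq]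
    have hXY : r * (a ^ 2 - b ^ 2) + 2 * a * b ≤ M := by
      nlinarith [ht2, hM0, sq_nonneg (r * (a ^ 2 - b ^ 2) + 2 * a * b + M)]
    have hcon2 : r ^ 2 * (a ^ 2 + b ^ 2) = r ^ 2 := by rw [hcon]; ring
    have h5 : a ^ 2 + (2 * r * a + b) ^ 2 ≤ (r + M) ^ 2 := by
      nlinarith [mul_le_mul_of_nonneg_left hXY hr, hcon, hcon2, hM2]
    linarith [h5, hc2]
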